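/- Let G be an ADMG over finite nodes V, and A, B, C pairwise disjoint with V = AN_G(A ∪ B ∪ C) and A m-separated from C by B. Then there exist A⁺ ⊇ A, C⁺ ⊇ C with A⁺ ∩ C⁺ = ∅, A⁺ ∪ B ∪ C⁺ = V, and A⁺ m-separated from C⁺ by B in G. -/

import Mathlib

/-- The kind of a step along a path in a mixed graph: a forward directed edge,
a backward directed edge, or a bi-directed edge. -/
inductive StepKind : Type
  | fwd | bwd | bidir

/-- Whether a step has an arrowhead at its left endpoint. -/
def StepKind.headLeft : StepKind → Prop
  | .fwd => False
  | _ => True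

/-- Whether a step has an arrowhead at its right endpoint. -/
def StepKind.headRight : StepKind → Prop
  | .bwd => False
  | _ => True

/-- A directed mixed graph: directed edges `dir` and bi-directed edges `bi`. -/
structure MixedGraph (V : Type*) where
  dir : V → V → Prop
  bi : V → V → Prop

namespace MixedGraph

variable {V : Type*}

/-- Validity of a step of the given kind between `u` (left) and `v` (right). -/
def stepOK (G : MixedGraph V) (u v : V) : StepKind → Prop
  | .fwd => G.dir u v
  | .bwd => G.dir v u
  | .bidir => G.bi u v

/-- A path in a mixed graph: distinct vertices `verts 0, …, verts n` joined by
edges of the recorded kinds. -/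
structure Path (G : MixedGraph V) where
  n : ℕ
  verts : Fin (n + 1) → V
  steps : Fin n → StepKind
  inj : Function.Injective verts
  ok : ∀ i : Fin n, G.stepOK (verts i.castSucc) (verts i.succ) (steps i)

/-- A mixed graph is acyclic if there is no nontrivial directed cycle. -/
def Acyclic (G : MixedGraph V) : Prop := ∀ v, ¬ Relation.TransGen G.dir v v

/-- `v` is a descendant of `u` (every node is its own descendant). -/
def descends (G : MixedGraph V) (u v : V) : Prop := Relation.ReflTransGen G.dir u v

/-- Ancestors of a set of nodes (via directed edges; each node is its own ancestor). -/
def ancestorsOf (G : MixedGraph V) (S : Set V) : Set V :=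
  {u | ∃ s ∈ S, Relation.ReflTransGen G.dir u s}

/-- The interior vertex `verts j` (for `0 < j < n+1`, i.e. `j` regarded in `Fin n`
with `0 < j`) is a collider on the path: both adjacent edges have an arrowhead at it. -/
def IsCollider (G : MixedGraph V) (p : Path G) (j : Fin p.n) (_hj : 0 < j.val) : Prop :=
  (p.steps ⟨j.val - 1, lt_of_le_of_lt (Nat.sub_le _ _) j.isLt⟩).headRight ∧
    (p.steps j).headLeft

/-- A path is blocked by `B` if some interior non-collider lies in `B`, or some
interior collider has no descendant in `B`. -/
def Blocked (G : MixedGraph V) (p : Path G) (B : Set V) : Prop :=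
  ∃ (j : Fin p.n) (hj : 0 < j.val),
    (¬ G.IsCollider p j hj ∧ p.verts j.castSucc ∈ B) ∨
      (G.IsCollider p j hj ∧ ∀ w ∈ B, ¬ G.descends (p.verts j.castSucc) w)

/-- m-separation (d-separation when there are no bi-directed edges): every path
from `A` to `C` is blocked by `B`. -/
def MSep (G : MixedGraph V) (A C B : Set V) : Prop :=
  ∀ p : Path G, p.verts 0 ∈ A → p.verts (Fin.last p.n) ∈ C → G.Blocked p B

/-- Subgraph induced on a set `W` of vertices. -/
def restrict (G : MixedGraph V) (W : Set V) : MixedGraph V where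
  dir u v := G.dir u v ∧ u ∈ W ∧ v ∈ W
  bi u v := G.bi u v ∧ u ∈ W ∧ v ∈ W

/-- Two distinct nodes are collider-connected if some path between them has all
interior nodes colliders (adjacent nodes are collider-connected). This is the
adjacency of the augmented graph. -/
def collConn (G : MixedGraph V) (u v : V) : Prop :=
  u ≠ v ∧ ∃ p : Path G, p.verts 0 = u ∧ p.verts (Fin.last p.n) = v ∧
    ∀ (j : Fin p.n) (hj : 0 < j.val), G.IsCollider p j hj

end MixedGraph

/-- Separation in an undirected graph with adjacency `adj`: there is no walk from
`A` to `C` avoiding `B`. -/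
def USep {V : Type*} (adj : V → V → Prop) (A C B : Set V) : Prop :=
  ∀ a ∈ A, ∀ c ∈ C,
    ¬ Relation.ReflTransGen (fun u v => adj u v ∧ u ∉ B ∧ v ∉ B) a c

namespace MSepAux

open MixedGraph

variable {V : Type*}

/-- Walks in a mixed graph. -/
inductive W (G : MixedGraph V) : V → V → Type _
  | nil (v : V) : W G v v
  | cons {u v c : V} (k : StepKind) (hk : G.stepOK u v k) (w : W G v c) : W G u c

namespace W

variable {G : MixedGraph V}

def append : ∀ {u v c : V}, W G u v → W G v c → W G u c
  | _, _, _, .nil _, w2 => w2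
  | _, _, _, .cons k hk w1, w2 => .cons k hk (append w1 w2)

def len : ∀ {u c : V}, W G u c → ℕ
  | _, _, .nil _ => 0
  | _, _, .cons _ _ w => len w + 1

def verts : ∀ {u c : V}, W G u c → List V
  | u, _, .nil _ => [u]
  | u, _, .cons _ _ w => u :: verts w

def kinds : ∀ {u c : V}, W G u c → List StepKind
  | _, _, .nil _ => []
  | _, _, .cons k _ w => k :: kinds w

def headK? : ∀ {u c : V}, W G u c → Option StepKind
  | _, _, .nil _ => none
  | _, _, .cons k _ _ => some k

def lastK : ∀ {u c : V}, StepKind → W G u c → StepKind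
  | _, _, kp, .nil _ => kp
  | _, _, _, .cons k _ w => lastK k w

def lastK? : ∀ {u c : V}, W G u c → Option StepKind
  | _, _, .nil _ => none
  | _, _, .cons k _ w => some (lastK k w)

end W

/-- The condition at an interior vertex `x` with incoming step kind `kL` and
outgoing step kind `kR`. -/
def Cond (G : MixedGraph V) (B : Set V) (x : V) (kL kR : StepKind) : Prop :=
  (kL.headRight ∧ kR.headLeft → x ∈ G.ancestorsOf B) ∧
    (¬ (kL.headRight ∧ kR.headLeft) → x ∉ B)

variable {G : MixedGraph V}

/-- Activeness of a walk whose start is preceded by a step of kind `kp`. -/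
def GoodAux (B : Set V) : ∀ {u c : V}, StepKind → W G u c → Prop
  | _, _, _, .nil _ => True
  | u, _, kp, .cons k _ w => Cond G B u kp k ∧ GoodAux B k w

/-- An active (m-connecting) walk given `B`. -/
def Good (B : Set V) : ∀ {u c : V}, W G u c → Prop
  | _, _, .nil _ => True
  | _, _, .cons k _ w => GoodAux B k w

namespace W

lemma len_append : ∀ {u v c : V} (w1 : W G u v) (w2 : W G v c),
    (w1.append w2).len = w1.len + w2.len := by
  intro u v c w1
  induction w1 with
  | nil _ => intro w2; simp [append, len]
  | cons k hk w ih => intro w2; simp [append, len, ih]; omega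

lemma length_verts : ∀ {u c : V} (w : W G u c), w.verts.length = w.len + 1 := by
  intro u c w
  induction w with
  | nil _ => simp [verts, len]
  | cons k hk w ih => simp [verts, len, ih]

lemma length_kinds : ∀ {u c : V} (w : W G u c), w.kinds.length = w.len := by
  intro u c w
  induction w with
  | nil _ => simp [kinds, len]
  | cons k hk w ih => simp [kinds, len, ih]

lemma verts_getElem_zero : ∀ {u c : V} (w : W G u c) (h : 0 < w.verts.length),
    w.verts[0] = u := by
  intro u c w h
  cases w <;> rfl

lemma verts_getElem_last : ∀ {u c : V} (w : W G u c) (h : w.len < w.verts.length),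
    w.verts[w.len] = c := by
  intro u c w
  induction w with
  | nil _ => intro h; rfl
  | cons k hk w ih =>
      intro h
      have : (W.cons k hk w).verts = _ :: w.verts := rfl
      simp only [this, len, List.getElem_cons_succ]
      exact ih (by have := length_verts w; omega)

lemma lastK_append : ∀ {u v c : V} (w1 : W G u v) (w2 : W G v c) (kp : StepKind),
    (w1.append w2).lastK kp = w2.lastK (w1.lastK kp) := by
  intro u v c w1
  induction w1 with
  | nil _ => intro w2 kp; rfl
  | cons k hk w ih => intro w2 kp; exact ih w2 k

lemma lastK?_append_single : ∀ {u v c : V} (w1 : W G u v) (k : StepKind)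
    (hk : G.stepOK v c k), (w1.append (.cons k hk (.nil c))).lastK? = some k := by
  intro u v c w1
  induction w1 with
  | nil _ => intro k hk; rfl
  | cons k1 hk1 w ih =>
      intro k hk
      show some (lastK k1 (w.append (.cons k hk (.nil c)))) = some k
      rw [lastK_append]
      rfl

end W

end MSepAux

namespace MSepAux

open MixedGraph

variable {V : Type*} {G : MixedGraph V}

namespace W

lemma goodAux_append {B : Set V} : ∀ {u v c : V} (kp : StepKind)
    (w1 : W G u v) (w2 : W G v c),
    GoodAux B kp w1 → Good B w2 →
    (∀ kR, w2.headK? = some kR → Cond G B v (w1.lastK kp) kR) →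
    GoodAux B kp (w1.append w2) := by
  intro u v c kp w1
  induction w1 generalizing kp with
  | nil _ =>
      intro w2 _ h2 hj
      cases w2 with
      | nil _ => trivial
      | cons kR hk w2' => exact ⟨hj kR rfl, h2⟩
  | cons k hk w1' ih =>
      intro w2 h1 h2 hj
      exact ⟨h1.1, ih k w2 h1.2 h2 hj⟩

lemma good_append {B : Set V} {u v c : V} {w1 : W G u v} {w2 : W G v c}
    (h1 : Good B w1) (h2 : Good B w2)
    (hj : ∀ kL kR, w1.lastK? = some kL → w2.headK? = some kR → Cond G B v kL kR) :
    Good B (w1.append w2) := by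
  cases w1 with
  | nil _ => exact h2
  | cons k hk w1' =>
      exact goodAux_append k w1' w2 h1 h2 (fun kR h => hj (w1'.lastK k) kR rfl h)

lemma goodAux_append_inv {B : Set V} : ∀ {u v c : V} (kp : StepKind)
    (w1 : W G u v) (w2 : W G v c),
    GoodAux B kp (w1.append w2) →
    GoodAux B kp w1 ∧ Good B w2 ∧
      (∀ kR, w2.headK? = some kR → Cond G B v (w1.lastK kp) kR) := by
  intro u v c kp w1
  induction w1 generalizing kp with
  | nil _ =>
      intro w2 h
      refine ⟨trivial, ?_, ?_⟩
      · cases w2 with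
        | nil _ => trivial
        | cons kR hk w2' => exact h.2
      · cases w2 with
        | nil _ => intro kR h'; cases h'
        | cons kR hk w2' =>
            intro kR' h'
            cases h'
            exact h.1
  | cons k hk w1' ih =>
      intro w2 h
      obtain ⟨h1', h2', hj'⟩ := ih k w2 h.2
      exact ⟨⟨h.1, h1'⟩, h2', hj'⟩

lemma good_of_forall {B : Set V} {u c : V} {w : W G u c}
    (h : ∀ kp, GoodAux B kp w) : Good B w := by
  cases w with
  | nil _ => trivial
  | cons k hk w' => exact (h k).2

/-- If a walk is active after a forward step and turns around at some point
(its last step is backward), then its start is an ancestor of `B`. -/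
lemma fwd_prefix {B : Set V} : ∀ {x t : V} (w : W G x t),
    GoodAux B .fwd w → w.lastK .fwd = .bwd → x ∈ G.ancestorsOf B := by
  intro x t w
  induction w with
  | nil _ => intro _ hl; exact (StepKind.noConfusion hl)
  | cons k hk w' ih =>
      intro h hl
      cases k with
      | fwd =>
          obtain ⟨b, hb, hr⟩ := ih h.2 hl
          exact ⟨b, hb, Relation.ReflTransGen.head hk hr⟩
      | bwd => exact h.1.1 ⟨trivial, trivial⟩
      | bidir => exact h.1.1 ⟨trivial, trivial⟩

lemma exists_split : ∀ {a c : V} (w : W G a c) (v : V), v ∈ w.verts →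
    ∃ (w1 : W G a v) (w2 : W G v c), w = w1.append w2 := by
  intro a c w
  induction w with
  | nil u =>
      intro v hv
      have : v = u := by simpa [verts] using hv
      subst this
      exact ⟨.nil v, .nil v, rfl⟩
  | cons k hk w' ih =>
      intro v hv
      rcases List.mem_cons.mp hv with h | h
      · subst h
        exact ⟨.nil v, .cons k hk w', rfl⟩
      · obtain ⟨w1', w2', he⟩ := ih v h
        exact ⟨.cons k hk w1', w2', congrArg (W.cons k hk) he⟩

lemma exists_dup_split : ∀ {a c : V} (w : W G a c), ¬ w.verts.Nodup →
    ∃ (v : V) (w1 : W G a v) (wm : W G v v) (w2 : W G v c),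
      w = w1.append (wm.append w2) ∧ 0 < wm.len := by
  intro a c w
  induction w with
  | nil u => intro h; exact absurd (List.nodup_singleton u) h
  | cons k hk w' ih =>
      rename_i u0 v0 c0
      intro hnd
      by_cases hmem : u0 ∈ w'.verts
      case pos =>
        obtain ⟨w1', w2', he⟩ := exists_split w' _ hmem
        refine ⟨_, .nil _, .cons k hk w1', w2', ?_, by simp [len]⟩
        show W.cons k hk w' = W.cons k hk (w1'.append w2')
        exact congrArg (W.cons k hk) he
      case neg =>
        have hnd' : ¬ w'.verts.Nodup := by
          intro h
          exact hnd (List.nodup_cons.mpr ⟨hmem, h⟩)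
        obtain ⟨v, w1, wm, w2, he, hm⟩ := ih hnd'
        exact ⟨v, .cons k hk w1, wm, w2, congrArg (W.cons k hk) he, hm⟩

end W

end MSepAux

namespace MSepAux

open MixedGraph

variable {V : Type*} {G : MixedGraph V}

namespace W

lemma good_shortcut {B : Set V} {a v c : V} {w1 : W G a v} {wm : W G v v}
    {w2 : W G v c} (hg : Good B (w1.append (wm.append w2))) (hm : 0 < wm.len) :
    Good B (w1.append w2) := by
  cases wm with
  | nil _ => simp [len] at hm
  | cons km hkm wm' =>
      cases w1 with
      | nil _ =>
          exact (goodAux_append_inv km wm' w2 hg).2.1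
      | cons k1 hk1 w1' =>
          obtain ⟨h1, hrest, hj1⟩ := goodAux_append_inv k1 w1' _ hg
          obtain ⟨hm', h2, hj2⟩ := goodAux_append_inv km wm' w2 hrest
          have hC1 : Cond G B v (w1'.lastK k1) km := hj1 km rfl
          refine goodAux_append k1 w1' w2 h1 h2 ?_
          intro kR hkR
          have hC2 : Cond G B v (wm'.lastK km) kR := hj2 kR hkR
          by_cases hcc : (w1'.lastK k1).headRight ∧ kR.headLeft
          · have hv : v ∈ G.ancestorsOf B := by
              by_cases h3 : km.headLeft
              · exact hC1.1 ⟨hcc.1, h3⟩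
              · have hkmfwd : km = .fwd := by
                  cases km
                  · rfl
                  · exact absurd trivial h3
                  · exact absurd trivial h3
                subst hkmfwd
                by_cases h4 : (wm'.lastK .fwd).headRight
                · exact hC2.1 ⟨h4, hcc.2⟩
                · have hbwd : wm'.lastK .fwd = .bwd := by
                    cases h5 : wm'.lastK .fwd
                    · rw [h5] at h4; exact absurd trivial h4
                    · rfl
                    · rw [h5] at h4; exact absurd trivial h4
                  obtain ⟨b, hbB, hbr⟩ := fwd_prefix wm' hm' hbwd
                  exact ⟨b, hbB, Relation.ReflTransGen.head hkm hbr⟩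
            exact ⟨fun _ => hv, fun h => absurd hcc h⟩
          · have hv : v ∉ B := by
              rcases not_and_or.mp hcc with h3 | h4
              · exact hC1.2 (fun hh => h3 hh.1)
              · exact hC2.2 (fun hh => h4 hh.2)
            exact ⟨fun h => absurd h hcc, fun _ => hv⟩

lemma good_to_nodup {B : Set V} {a c : V} (w : W G a c) (hg : Good B w) :
    ∃ w' : W G a c, Good B w' ∧ w'.verts.Nodup := by
  suffices H : ∀ (n : ℕ) (w : W G a c), w.len = n → Good B w →
      ∃ w' : W G a c, Good B w' ∧ w'.verts.Nodup from H w.len w rfl hg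
  intro n
  induction n using Nat.strong_induction_on with
  | _ n IH =>
      intro w hlen hg
      by_cases hnd : w.verts.Nodup
      · exact ⟨w, hg, hnd⟩
      · obtain ⟨v, w1, wm, w2, he, hm⟩ := exists_dup_split w hnd
        subst he
        have hg' : Good B (w1.append w2) := good_shortcut hg hm
        have hlt : (w1.append w2).len < n := by
          rw [← hlen]
          rw [len_append, len_append, len_append]
          omega
        exact IH _ hlt (w1.append w2) rfl hg'

end W

end MSepAux

namespace MSepAux

open MixedGraph

variable {V : Type*} {G : MixedGraph V}

namespace W

lemma step_spec : ∀ {a c : V} (w : W G a c) (i : ℕ), i < w.len →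
    ∀ (h1 : i < w.verts.length) (h2 : i + 1 < w.verts.length)
      (h3 : i < w.kinds.length),
      G.stepOK (w.verts[i]) (w.verts[i + 1]) (w.kinds[i]) := by
  intro a c w
  induction w with
  | nil _ => intro i hi; simp [len] at hi
  | cons k hk w' ih =>
      intro i hi h1 h2 h3
      cases i with
      | zero =>
          have hv : w'.verts[0]'(by have := length_verts w'; omega) = _ :=
            verts_getElem_zero w' (by have := length_verts w'; omega)
          show G.stepOK ((_ :: w'.verts)[0]) ((_ :: w'.verts)[1]) ((k :: w'.kinds)[0])
          rw [← hv] at hk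
          exact hk
      | succ j =>
          show G.stepOK ((_ :: w'.verts)[j+1]) ((_ :: w'.verts)[j+2]) ((k :: w'.kinds)[j+1])
          show G.stepOK (w'.verts[j]'(by have := length_verts w'; simp [len] at hi; omega))
            (w'.verts[j+1]'(by have := length_verts w'; simp [len] at hi; omega))
            (w'.kinds[j]'(by have := length_kinds w'; simp [len] at hi; omega))
          exact ih j (by simp [len] at hi; omega) _ _ _

lemma condAux_spec {B : Set V} : ∀ {a c : V} (w : W G a c) (kp : StepKind),
    GoodAux B kp w → ∀ (i : ℕ), i < w.len →
    ∀ (h1 : i < w.verts.length) (h3 : i < w.kinds.length),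
      Cond G B (w.verts[i])
        (if i = 0 then kp else w.kinds[i-1]'(by omega)) (w.kinds[i]) := by
  intro a c w
  induction w with
  | nil _ => intro kp _ i hi; simp [len] at hi
  | cons k hk w' ih =>
      intro kp hgp i hi h1 h3
      obtain ⟨hc, hg'⟩ := hgp
      cases i with
      | zero => simpa [verts, kinds] using hc
      | succ j =>
          have hj' : j < w'.len := by simp [len] at hi; omega
          have hIH := ih k hg' j hj' (by have := length_verts w'; omega)
            (by have := length_kinds w'; omega)
          cases j with
          | zero => simpa [verts, kinds] using hIH
          | succ m => simpa [verts, kinds] using hIH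

end W

end MSepAux

namespace MSepAux

open MixedGraph

variable {V : Type*} {G : MixedGraph V}

namespace W

lemma cond_spec {B : Set V} {a c : V} (w : W G a c) (hg : Good B w) :
    ∀ (i : ℕ), 0 < i → i < w.len →
    ∀ (h1 : i < w.verts.length) (h3 : i < w.kinds.length),
      Cond G B (w.verts[i]) (w.kinds[i-1]'(by omega)) (w.kinds[i]) := by
  cases w with
  | nil _ => intro i _ hi; simp [len] at hi
  | cons k hk w' =>
      intro i hpos hi h1 h3
      have hg' : GoodAux B k w' := hg
      cases i with
      | zero => omega
      | succ j =>
          have hj' : j < w'.len := by simp [len] at hi; omega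
          have hIH := condAux_spec w' k hg' j hj'
            (by have := length_verts w'; omega) (by have := length_kinds w'; omega)
          cases j with
          | zero => simpa [verts, kinds] using hIH
          | succ m => simpa [verts, kinds] using hIH

lemma walk_to_unblocked {B : Set V} {a c : V} (w0 : W G a c) (hg0 : Good B w0) :
    ∃ p : MixedGraph.Path G, p.verts 0 = a ∧ p.verts (Fin.last p.n) = c ∧
      ¬ G.Blocked p B := by
  obtain ⟨w, hg, hnd⟩ := good_to_nodup w0 hg0
  have hvl := length_verts w
  have hkl := length_kinds w
  refine ⟨⟨w.len,
      fun i => w.verts[i.val]'(by have := i.isLt; omega),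
      fun i => w.kinds[i.val]'(by have := i.isLt; omega), ?_, ?_⟩, ?_, ?_, ?_⟩
  · intro i j hij
    have h1 : i.val < w.verts.length := by have := i.isLt; omega
    have h2 : j.val < w.verts.length := by have := j.isLt; omega
    have : (⟨i.val, h1⟩ : Fin w.verts.length) = ⟨j.val, h2⟩ :=
      List.nodup_iff_injective_get.mp hnd (by simpa using hij)
    exact Fin.ext (by simpa using congrArg Fin.val this)
  · intro i
    exact step_spec w i.val i.isLt _ _ _
  · exact verts_getElem_zero w _
  · exact verts_getElem_last w (by omega)
  · rintro ⟨j, hj, H⟩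
    have hjl : (j : ℕ) < w.len := j.isLt
    have hc := cond_spec w hg j.val hj hjl (by omega) (by omega)
    rcases H with ⟨hnc, hmem⟩ | ⟨hcol, hnd'⟩
    · exact hc.2 hnc hmem
    · obtain ⟨b, hbB, hbr⟩ := hc.1 hcol
      exact hnd' b hbB hbr

end W

end MSepAux

namespace MSepAux

open MixedGraph

variable {V : Type*} {G : MixedGraph V}

lemma cond_of_not_blocked {B : Set V} (p : MixedGraph.Path G)
    (hb : ¬ G.Blocked p B) (j : Fin p.n) (hj : 0 < j.val) :
    Cond G B (p.verts j.castSucc)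
      (p.steps ⟨j.val - 1, lt_of_le_of_lt (Nat.sub_le _ _) j.isLt⟩) (p.steps j) := by
  constructor
  · intro hcc
    by_contra hnot
    exact hb ⟨j, hj, Or.inr ⟨hcc, fun b hb' hd => hnot ⟨b, hb', hd⟩⟩⟩
  · intro hnc hmem
    exact hb ⟨j, hj, Or.inl ⟨hnc, hmem⟩⟩

lemma of_path {B : Set V} (p : MixedGraph.Path G) (hb : ¬ G.Blocked p B) :
    ∃ w : W G (p.verts 0) (p.verts (Fin.last p.n)), Good B w := by
  have main : ∀ (k i : ℕ) (h : i + k = p.n),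
      ∃ w : W G (p.verts ⟨i, by omega⟩) (p.verts (Fin.last p.n)),
        (∀ _ : 0 < i, GoodAux B (p.steps ⟨i - 1, by omega⟩) w) ∧
          (i = 0 → Good B w) := by
    intro k
    induction k with
    | zero =>
        intro i h
        have hin : i = p.n := by omega
        subst hin
        exact ⟨W.nil _, fun _ => trivial, fun _ => trivial⟩
    | succ k ih =>
        intro i h
        have hi_lt : i < p.n := by omega
        obtain ⟨w', hw1', _⟩ := ih (i + 1) (by omega)
        have hok := p.ok ⟨i, hi_lt⟩
        refine ⟨W.cons (p.steps ⟨i, hi_lt⟩) hok w', ?_, ?_⟩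
        · intro hi
          exact ⟨cond_of_not_blocked p hb ⟨i, hi_lt⟩ hi, hw1' (Nat.succ_pos i)⟩
        · intro _
          exact hw1' (Nat.succ_pos i)
  obtain ⟨w, _, hw0⟩ := main p.n 0 (by omega)
  have e : (0 : Fin (p.n + 1)) = ⟨0, by omega⟩ := by
    ext; simp
  rw [e]
  exact ⟨w, hw0 rfl⟩

lemma reach_case {B : Set V} {x t : V} (h : Relation.ReflTransGen G.dir x t) :
    x ∈ G.ancestorsOf B ∨
      (t ∉ B ∧ Relation.ReflTransGen (fun a b => G.dir a b ∧ b ∉ B) x t) := by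
  induction h using Relation.ReflTransGen.head_induction_on with
  | refl =>
      by_cases ht : t ∈ B
      · exact Or.inl ⟨t, ht, Relation.ReflTransGen.refl⟩
      · exact Or.inr ⟨ht, Relation.ReflTransGen.refl⟩
  | head hxy hyt ih =>
      rename_i x' y'
      by_cases hy : y' ∈ B
      · exact Or.inl ⟨y', hy, Relation.ReflTransGen.single hxy⟩
      · rcases ih with ⟨b, hb, hr⟩ | ⟨htB, hr⟩
        · exact Or.inl ⟨b, hb, Relation.ReflTransGen.head hxy hr⟩
        · exact Or.inr ⟨htB, Relation.ReflTransGen.head ⟨hxy, hy⟩ hr⟩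

lemma fwd_walk {B : Set V} {x t : V}
    (h : Relation.ReflTransGen (fun a b => G.dir a b ∧ b ∉ B) x t) (hx : x ∉ B) :
    ∃ w : W G x t, (∀ kp, GoodAux B kp w) ∧
      (∀ k, w.headK? = some k → k = .fwd) := by
  induction h using Relation.ReflTransGen.head_induction_on with
  | refl => exact ⟨W.nil _, fun _ => trivial, fun k hk => by cases hk⟩
  | head hxy hyt ih =>
      rename_i x' y'
      obtain ⟨w', hw', _⟩ := ih hxy.2
      refine ⟨W.cons .fwd hxy.1 w', ?_, ?_⟩
      · intro kp
        exact ⟨⟨fun hh => absurd hh.2 (fun hf => hf), fun _ => hx⟩, hw' .fwd⟩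
      · intro k hk
        cases hk
        rfl

lemma bwd_walk {B : Set V} {x t : V}
    (h : Relation.ReflTransGen (fun a b => G.dir a b ∧ b ∉ B) x t) :
    ∃ w : W G t x, Good B w ∧ (∀ k, w.lastK? = some k → k = .bwd) := by
  induction h using Relation.ReflTransGen.head_induction_on with
  | refl => exact ⟨W.nil _, trivial, fun k hk => by cases hk⟩
  | head hxy hyt ih =>
      rename_i x' y'
      obtain ⟨w', hw', hwl⟩ := ih
      refine ⟨w'.append (W.cons .bwd hxy.1 (W.nil x')), ?_, ?_⟩
      · refine W.good_append hw' trivial ?_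
        intro kL kR h1 h2
        cases h2
        have := hwl kL h1
        subst this
        exact ⟨fun hh => absurd hh.1 (fun hf => hf), fun _ => hxy.2⟩
      · intro k hk
        rw [W.lastK?_append_single w' .bwd hxy.1] at hk
        cases hk
        rfl

end MSepAux

/-- extension of m-separated sets in an ADMG whose nodes are all
ancestors of `A ∪ B ∪ C`. -/
theorem stmt3 {V : Type*} [Fintype V] (G : MixedGraph V)
    (hacyc : G.Acyclic)
    (A B C : Set V)
    (hAB : Disjoint A B) (hAC : Disjoint A C) (hBC : Disjoint B C)
    (hanc : G.ancestorsOf (A ∪ B ∪ C) = Set.univ)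
    (hsep : G.MSep A C B) :
    ∃ A' C' : Set V, A ⊆ A' ∧ C ⊆ C' ∧ Disjoint A' C' ∧
      A' ∪ B ∪ C' = Set.univ ∧ G.MSep A' C' B := by
  classical
  set C' : Set V :=
    C ∪ {u | u ∉ A ∧ u ∉ B ∧ ∃ c₀ ∈ C, ∃ w : MSepAux.W G u c₀, MSepAux.Good B w}
    with hC'
  refine ⟨(B ∪ C')ᶜ, C', ?_, ?_, ?_, ?_, ?_⟩
  · -- A ⊆ A'
    intro a ha
    simp only [Set.mem_compl_iff, Set.mem_union, not_or]
    refine ⟨Set.disjoint_left.mp hAB ha, ?_⟩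
    rw [hC']
    rintro (haC | ⟨haA, -, -⟩)
    · exact Set.disjoint_left.mp hAC ha haC
    · exact haA ha
  · -- C ⊆ C'
    rw [hC']; exact Set.subset_union_left
  · -- disjoint
    refine Set.disjoint_left.mpr ?_
    intro x hx hxC
    exact hx (Set.mem_union_right _ hxC)
  · -- union is univ
    rw [Set.union_assoc]
    exact Set.compl_union_self _
  · -- m-separation
    intro p hp0 hpl
    by_contra hb
    obtain ⟨w_p, hwp⟩ := MSepAux.of_path (B := B) p hb
    have ha' : p.verts 0 ∉ B ∪ C' := hp0
    have hc' : p.verts (Fin.last p.n) ∈ C' := hpl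
    have ha'B : p.verts 0 ∉ B := fun h => ha' (Or.inl h)
    have ha'C' : p.verts 0 ∉ C' := fun h => ha' (Or.inr h)
    have hWConn : ∃ c₀ ∈ C, ∃ w : MSepAux.W G (p.verts 0) c₀,
        MSepAux.Good B w := by
      rw [hC'] at hc'
      rcases hc' with hc'C | hc'2
      · exact ⟨p.verts (Fin.last p.n), hc'C, w_p, hwp⟩
      · obtain ⟨hc'A, hc'B, c₀, hc₀, w_q, hwq⟩ := hc'2
        by_cases hcol : ∃ kL kR, w_p.lastK? = some kL ∧ w_q.headK? = some kR ∧
            kL.headRight ∧ kR.headLeft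
        · -- collider at the junction: use ancestrality
          have hcanc : p.verts (Fin.last p.n) ∈ G.ancestorsOf (A ∪ B ∪ C) := by
            rw [hanc]; trivial
          obtain ⟨t, ht, hrtg⟩ := hcanc
          rcases MSepAux.reach_case (B := B) hrtg with hAnB | ⟨htB, hr⟩
          · exact ⟨c₀, hc₀, w_p.append w_q,
              MSepAux.W.good_append hwp hwq
                (fun kL kR _ _ => ⟨fun _ => hAnB, fun _ => hc'B⟩)⟩
          · rcases ht with htA | htC
            · rcases htA with htA | htBm
              · -- t ∈ A : contradiction with hsep
                obtain ⟨wb, hwb, hwbl⟩ := MSepAux.bwd_walk hr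
                have hgood : MSepAux.Good B (wb.append w_q) :=
                  MSepAux.W.good_append hwb hwq (by
                    intro kL kR h1 h2
                    have := hwbl kL h1
                    subst this
                    exact ⟨fun hh => absurd hh.1 (fun hf => hf), fun _ => hc'B⟩)
                obtain ⟨p', h0, hl, hnb⟩ := MSepAux.W.walk_to_unblocked _ hgood
                exact absurd (hsep p' (h0 ▸ htA) (hl ▸ hc₀)) hnb
              · exact absurd htBm htB
            · -- t ∈ C
              obtain ⟨wf, hwfA, hwfk⟩ := MSepAux.fwd_walk hr hc'B
              refine ⟨t, htC, w_p.append wf,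
                MSepAux.W.good_append hwp (MSepAux.W.good_of_forall hwfA) ?_⟩
              intro kL kR h1 h2
              have := hwfk kR h2
              subst this
              exact ⟨fun hh => absurd hh.2 (fun hf => hf), fun _ => hc'B⟩
        · exact ⟨c₀, hc₀, w_p.append w_q,
            MSepAux.W.good_append hwp hwq (fun kL kR h1 h2 =>
              ⟨fun hcc => absurd ⟨kL, kR, h1, h2, hcc⟩ hcol, fun _ => hc'B⟩)⟩
    obtain ⟨c₀, hc₀, w, hw⟩ := hWConn
    by_cases haA : p.verts 0 ∈ A
    · obtain ⟨p', h0, hl, hnb⟩ := MSepAux.W.walk_to_unblocked w hw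
      exact hnb (hsep p' (h0 ▸ haA) (hl ▸ hc₀))
    · refine ha'C' ?_
      rw [hC']
      exact Or.inr ⟨haA, ha'B, c₀, hc₀, w, hw⟩
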